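/- Fix p > 0 and let I ⊆ ℝ be an open interval. If ȳ : I → ℝ is a differentiable function such that for every μ ∈ I one has ∂E/∂y(ȳ(μ),p,μ) = 0 and ∂²E/∂y²(ȳ(μ),p,μ) < 0, then ȳ'(μ) > 0 for every μ ∈ I; moreover ȳ'(μ) = −(∂/∂μ ∂E/∂y)(ȳ(μ),p,μ) / ∂²E/∂y²(ȳ(μ),p,μ). -/

import Mathlib

/-- The single-cell partition function `K(y,p,μ)` with cell volume `υ` and ratio `a`. -/
noncomputable def K (υ a y p μ : ℝ) : ℝ :=
  ∑' n : ℕ, (υ ^ n / (Nat.factorial n : ℝ)) *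
    Real.exp ((y + μ) * n - (a * p / 2) * (n : ℝ) ^ 2)

/-- The function `E(y,p,μ) = -y²/(2p) + ln K(y,p,μ)`. -/
noncomputable def E (υ a y p μ : ℝ) : ℝ :=
  -(y ^ 2) / (2 * p) + Real.log (K υ a y p μ)


open Real

noncomputable def Sk (υ β : ℝ) (k : ℕ) (x : ℝ) : ℝ :=
  ∑' n : ℕ, (n : ℝ) ^ k * (υ ^ n / (Nat.factorial n : ℝ)) * Real.exp (x * n - β * (n : ℝ) ^ 2)

lemma summable_term (υ β : ℝ) (hυ : 0 < υ) (hβ : 0 < β) (k : ℕ) (x : ℝ) :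
    Summable (fun n : ℕ => (n : ℝ) ^ k * (υ ^ n / (Nat.factorial n : ℝ)) *
      Real.exp (x * n - β * (n : ℝ) ^ 2)) := by
  apply Summable.of_nonneg_of_le
    (f := fun n : ℕ => (υ * Real.exp (x + k)) ^ n / (Nat.factorial n : ℝ))
  · intro n; positivity
  · intro n
    have hn : (n : ℝ) ≤ Real.exp n := by
      have := Real.add_one_le_exp (n : ℝ); linarith
    have h1 : (n : ℝ) ^ k ≤ Real.exp (k * n) := by
      have := pow_le_pow_left₀ (Nat.cast_nonneg n) hn k
      rwa [← Real.exp_nat_mul] at this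
    have h2 : Real.exp (x * n - β * (n : ℝ) ^ 2) ≤ Real.exp (x * n) := by
      apply Real.exp_le_exp.2
      nlinarith [sq_nonneg (n : ℝ), hβ.le]
    have h3 : (υ * Real.exp (x + k)) ^ n / (Nat.factorial n : ℝ)
        = Real.exp (k * n) * (υ ^ n / (Nat.factorial n : ℝ)) * Real.exp (x * n) := by
      rw [mul_pow, ← Real.exp_nat_mul]
      have : (n : ℝ) * (x + k) = (k : ℝ) * n + x * n := by ring
      rw [this, Real.exp_add]
      field_simp
    rw [h3]
    have hc : 0 ≤ υ ^ n / (Nat.factorial n : ℝ) := by positivity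
    have := mul_le_mul (mul_le_mul_of_nonneg_right h1 hc) h2 (Real.exp_pos _).le
      (by positivity : (0:ℝ) ≤ Real.exp ((k:ℝ) * n) * (υ ^ n / (Nat.factorial n : ℝ)))
    exact this
  · exact Real.summable_pow_div_factorial _

lemma Sk_pos (υ β : ℝ) (hυ : 0 < υ) (hβ : 0 < β) (x : ℝ) : 0 < Sk υ β 0 x := by
  apply Summable.tsum_pos (summable_term υ β hυ hβ 0 x) (fun n => by positivity) 0
  simp

lemma hasDerivAt_Sk (υ β : ℝ) (hυ : 0 < υ) (hβ : 0 < β) (k : ℕ) (x : ℝ) :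
    HasDerivAt (Sk υ β k) (Sk υ β (k + 1) x) x := by
  set R : ℝ := |x| + 1 with hR
  have hxR : x ∈ Set.Ioo (-R) R := by
    constructor <;> cases abs_lt.1 (show |x| < R by simp [hR]) <;> linarith [abs_lt.1 (show |x| < R by simp [hR])]
  refine hasDerivAt_tsum_of_isPreconnected
    (u := fun n : ℕ => (n : ℝ) ^ (k+1) * (υ ^ n / (Nat.factorial n : ℝ)) *
      Real.exp (R * n - β * (n : ℝ) ^ 2))
    (g' := fun n y => (n : ℝ) ^ (k+1) * (υ ^ n / (Nat.factorial n : ℝ)) *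
      Real.exp (y * n - β * (n : ℝ) ^ 2))
    (summable_term υ β hυ hβ (k+1) R) (isOpen_Ioo (a := -R) (b := R)) isPreconnected_Ioo
    (fun n y _ => ?_) (fun n y hy => ?_) hxR (summable_term υ β hυ hβ k x) hxR
  · have h : HasDerivAt (fun y : ℝ => y * n - β * (n : ℝ) ^ 2) (n : ℝ) y := by
      simpa using (hasDerivAt_id y).mul_const (n:ℝ) |>.sub_const (β * (n : ℝ) ^ 2)
    have := (h.exp).const_mul ((n : ℝ) ^ k * (υ ^ n / (Nat.factorial n : ℝ)))
    refine this.congr_deriv ?_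
    ring
  · have hy' : y * n ≤ R * n :=
      mul_le_mul_of_nonneg_right (le_of_lt hy.2) (Nat.cast_nonneg n)
    have : Real.exp (y * n - β * (n : ℝ) ^ 2) ≤ Real.exp (R * n - β * (n : ℝ) ^ 2) :=
      Real.exp_le_exp.2 (by linarith)
    rw [Real.norm_eq_abs, abs_of_nonneg (by positivity)]
    exact mul_le_mul_of_nonneg_left this (by positivity)

lemma Sk_cs (υ β : ℝ) (hυ : 0 < υ) (hβ : 0 < β) (x : ℝ) :
    Sk υ β 1 x ^ 2 < Sk υ β 0 x * Sk υ β 2 x := by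
  set w : ℕ → ℝ := fun n => (υ ^ n / (Nat.factorial n : ℝ)) * Real.exp (x * n - β * (n : ℝ) ^ 2)
    with hw
  have hwpos : ∀ n, 0 < w n := fun n => by rw [hw]; positivity
  have hs : ∀ k : ℕ, Summable (fun n : ℕ => (n : ℝ) ^ k * w n) := fun k => by
    simpa [hw, mul_assoc] using summable_term υ β hυ hβ k x
  have hSk : ∀ k : ℕ, Sk υ β k x = ∑' n : ℕ, (n : ℝ) ^ k * w n := fun k => by
    simp [Sk, hw, mul_assoc]
  set A := Sk υ β 0 x with hA
  set B := Sk υ β 1 x with hB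
  set C := Sk υ β 2 x with hC
  have hApos : 0 < A := Sk_pos υ β hυ hβ x
  have hkey : ∀ n : ℕ, w n * ((n : ℝ) * A - B) ^ 2
      = A ^ 2 * ((n : ℝ) ^ 2 * w n) - 2 * A * B * ((n : ℝ) ^ 1 * w n) + B ^ 2 * ((n : ℝ) ^ 0 * w n) := by
    intro n; ring
  have hsum : Summable (fun n : ℕ => w n * ((n : ℝ) * A - B) ^ 2) := by
    rw [funext hkey]
    exact (((hs 2).mul_left _).sub ((hs 1).mul_left _)).add ((hs 0).mul_left _)
  have hT : (∑' n : ℕ, w n * ((n : ℝ) * A - B) ^ 2) = A * (A * C - B ^ 2) := by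
    rw [funext hkey, Summable.tsum_add (((hs 2).mul_left _).sub ((hs 1).mul_left _)) ((hs 0).mul_left _),
      Summable.tsum_sub ((hs 2).mul_left _) ((hs 1).mul_left _), tsum_mul_left, tsum_mul_left, tsum_mul_left,
      ← hSk 0, ← hSk 1, ← hSk 2, ← hA, ← hB, ← hC]
    ring
  have hTpos : 0 < ∑' n : ℕ, w n * ((n : ℝ) * A - B) ^ 2 := by
    rcases eq_or_ne B 0 with hB0 | hB0
    · apply Summable.tsum_pos hsum (fun n => by positivity) 1
      rw [hB0]
      have := hwpos 1
      have h1 : ((1 : ℕ) : ℝ) * A - 0 = A := by simp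
      rw [h1]
      positivity
    · apply Summable.tsum_pos hsum (fun n => by positivity) 0
      have := hwpos 0
      have h0 : ((0 : ℕ) : ℝ) * A - B = -B := by simp
      rw [h0]
      exact mul_pos (hwpos 0) (pow_two_pos_of_ne_zero (neg_ne_zero.2 hB0))
  rw [hT] at hTpos
  nlinarith
section EDeriv

variable (υ a p : ℝ)

/-- Auxiliary: the quotient `S₁/S₀` (logarithmic derivative of `K` in `y`). -/
noncomputable def Gq (β : ℝ) (x : ℝ) : ℝ := Sk υ β 1 x / Sk υ β 0 x

/-- Auxiliary: derivative of `Gq`. -/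
noncomputable def Qq (β : ℝ) (x : ℝ) : ℝ :=
  (Sk υ β 2 x * Sk υ β 0 x - Sk υ β 1 x * Sk υ β 1 x) / Sk υ β 0 x ^ 2

lemma K_eq_Sk (y μ : ℝ) : K υ a y p μ = Sk υ (a * p / 2) 0 (y + μ) := by
  simp [K, Sk]

lemma Qq_pos (β : ℝ) (hυ : 0 < υ) (hβ : 0 < β) (x : ℝ) : 0 < Qq υ β x := by
  have h1 := Sk_cs υ β hυ hβ x
  have h0 := Sk_pos υ β hυ hβ x
  apply div_pos _ (by positivity)
  nlinarith

lemma hasDerivAt_Gq (β : ℝ) (hυ : 0 < υ) (hβ : 0 < β) (x : ℝ) :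
    HasDerivAt (Gq υ β) (Qq υ β x) x := by
  have h1 : HasDerivAt (Sk υ β 1) (Sk υ β 2 x) x := hasDerivAt_Sk υ β hυ hβ 1 x
  have h0 : HasDerivAt (Sk υ β 0) (Sk υ β 1 x) x := hasDerivAt_Sk υ β hυ hβ 0 x
  exact h1.div h0 (ne_of_gt (Sk_pos υ β hυ hβ x))

lemma hasDerivAt_E (hυ : 0 < υ) (ha : 1 < a) (hp : 0 < p) (μ y : ℝ) :
    HasDerivAt (fun y => E υ a y p μ) (-(y / p) + Gq υ (a * p / 2) (y + μ)) y := by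
  set β := a * p / 2 with hβdef
  have hβ : 0 < β := by rw [hβdef]; nlinarith
  have hfun : (fun y => E υ a y p μ)
      = fun y => -(y ^ 2) / (2 * p) + Real.log (Sk υ β 0 (y + μ)) := by
    funext y
    rw [E, K_eq_Sk]
  rw [hfun]
  have hpart1 : HasDerivAt (fun y : ℝ => -(y ^ 2) / (2 * p)) (-(y / p)) y := by
    have h1 : HasDerivAt (fun y : ℝ => y ^ 2) (2 * y) y := by simpa using hasDerivAt_pow 2 y
    have h2 := (h1.div_const (2 * p)).fun_neg
    have hfun2 : (fun y : ℝ => -(y ^ 2) / (2 * p)) = fun y : ℝ => -(y ^ 2 / (2 * p)) := by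
      funext y; ring
    rw [hfun2]
    refine h2.congr_deriv ?_
    rw [mul_div_mul_left _ _ two_ne_zero]
  have hshift : HasDerivAt (fun y : ℝ => y + μ) 1 y := (hasDerivAt_id y).add_const μ
  have hS : HasDerivAt (fun y => Sk υ β 0 (y + μ)) (Sk υ β 1 (y + μ) * 1) y :=
    (HasDerivAt.comp y (hasDerivAt_Sk υ β hυ hβ 0 (y + μ)) hshift :)
  have hlog := hS.log (ne_of_gt (Sk_pos υ β hυ hβ (y + μ)))
  have := hpart1.fun_add hlog
  refine this.congr_deriv ?_
  rw [Gq]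
  ring

lemma deriv_E_eq (hυ : 0 < υ) (ha : 1 < a) (hp : 0 < p) (μ : ℝ) :
    deriv (fun y => E υ a y p μ) = fun y => -(y / p) + Gq υ (a * p / 2) (y + μ) :=
  funext fun y => (hasDerivAt_E υ a p hυ ha hp μ y).deriv

lemma hasDerivAt_deriv_E (hυ : 0 < υ) (ha : 1 < a) (hp : 0 < p) (μ y : ℝ) :
    HasDerivAt (deriv (fun y => E υ a y p μ))
      (-(1 / p) + Qq υ (a * p / 2) (y + μ)) y := by
  set β := a * p / 2 with hβdef
  have hβ : 0 < β := by rw [hβdef]; nlinarith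
  rw [deriv_E_eq υ a p hυ ha hp μ]
  have hpart1 : HasDerivAt (fun y : ℝ => -(y / p)) (-(1 / p)) y := by
    simpa using ((hasDerivAt_id y).div_const p).fun_neg
  have hshift : HasDerivAt (fun y : ℝ => y + μ) 1 y := (hasDerivAt_id y).add_const μ
  have hG : HasDerivAt (fun y : ℝ => Gq υ β (y + μ)) (Qq υ β (y + μ) * 1) y :=
    (HasDerivAt.comp y (hasDerivAt_Gq υ β hυ hβ (y + μ)) hshift :)
  have := hpart1.fun_add hG
  simpa using this

end EDeriv

theorem stmt_3 (υ a : ℝ) (hυ : 0 < υ) (ha : 1 < a) (p : ℝ) (hp : 0 < p)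
    (c d : ℝ) (ybar : ℝ → ℝ)
    (hdiff : ∀ μ ∈ Set.Ioo c d, DifferentiableAt ℝ ybar μ)
    (hcrit : ∀ μ ∈ Set.Ioo c d, deriv (fun y => E υ a y p μ) (ybar μ) = 0)
    (hneg : ∀ μ ∈ Set.Ioo c d, deriv (deriv (fun y => E υ a y p μ)) (ybar μ) < 0) :
    ∀ μ ∈ Set.Ioo c d, 0 < deriv ybar μ ∧
      deriv ybar μ =
        -(deriv (fun μ' => deriv (fun y => E υ a y p μ') (ybar μ)) μ) /
          deriv (deriv (fun y => E υ a y p μ)) (ybar μ) := by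
  set β := a * p / 2 with hβdef
  have hβ : 0 < β := by rw [hβdef]; nlinarith
  intro μ hμ
  set yb := ybar μ with hyb
  set s := yb + μ with hs
  set y' := deriv ybar μ with hy'
  -- second derivative in y
  have hA : deriv (deriv (fun y => E υ a y p μ)) yb = -(1 / p) + Qq υ β s :=
    (hasDerivAt_deriv_E υ a p hυ ha hp μ yb).deriv
  -- mixed derivative
  have hBfun : (fun μ' => deriv (fun y => E υ a y p μ') yb)
      = fun μ' => -(yb / p) + Gq υ β (yb + μ') :=
    funext fun μ' => (hasDerivAt_E υ a p hυ ha hp μ' yb).deriv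
  have hBder : HasDerivAt (fun μ' => -(yb / p) + Gq υ β (yb + μ')) (Qq υ β s) μ := by
    have hshift : HasDerivAt (fun μ' : ℝ => yb + μ') 1 μ := by
      simpa using (hasDerivAt_id μ).const_add yb
    have hG : HasDerivAt (fun μ' : ℝ => Gq υ β (yb + μ')) (Qq υ β s * 1) μ :=
      (hasDerivAt_Gq υ β hυ hβ s).comp μ hshift
    simpa using hG.const_add (-(yb / p))
  have hB : deriv (fun μ' => deriv (fun y => E υ a y p μ') yb) μ = Qq υ β s := by
    rw [hBfun]; exact hBder.deriv
  -- the implicit function equation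
  have hΦ0 : ∀ μ' ∈ Set.Ioo c d, -(ybar μ' / p) + Gq υ β (ybar μ' + μ') = 0 := by
    intro μ' hμ'
    have := hcrit μ' hμ'
    rw [deriv_E_eq υ a p hυ ha hp μ'] at this
    exact this
  have hΦder : HasDerivAt (fun μ' => -(ybar μ' / p) + Gq υ β (ybar μ' + μ'))
      (-(y' / p) + Qq υ β s * (y' + 1)) μ := by
    have hyd : HasDerivAt ybar y' μ := (hdiff μ hμ).hasDerivAt
    have h1 : HasDerivAt (fun μ' => -(ybar μ' / p)) (-(y' / p)) μ := (hyd.div_const p).neg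
    have hshift : HasDerivAt (fun μ' : ℝ => ybar μ' + μ') (y' + 1) μ :=
      hyd.add (hasDerivAt_id μ)
    have h2 : HasDerivAt ((Gq υ β) ∘ (fun μ' => ybar μ' + μ')) (Qq υ β s * (y' + 1)) μ :=
      HasDerivAt.comp μ (hasDerivAt_Gq υ β hυ hβ s) hshift
    exact h1.add h2
  have hΦ0' : HasDerivAt (fun μ' => -(ybar μ' / p) + Gq υ β (ybar μ' + μ')) 0 μ := by
    have hev : (fun μ' => -(ybar μ' / p) + Gq υ β (ybar μ' + μ')) =ᶠ[nhds μ] fun _ => (0:ℝ) := by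
      filter_upwards [isOpen_Ioo.mem_nhds hμ] with μ' hμ' using hΦ0 μ' hμ'
    exact (hasDerivAt_const μ (0:ℝ)).congr_of_eventuallyEq hev
  have heq : -(y' / p) + Qq υ β s * (y' + 1) = 0 := hΦder.unique hΦ0'
  -- positivity and numerics
  have hQpos : 0 < Qq υ β s := Qq_pos υ β hυ hβ s
  have hD : -(1 / p) + Qq υ β s < 0 := by
    have := hneg μ hμ
    rwa [hA] at this
  have hyval : y' = -(Qq υ β s) / (-(1 / p) + Qq υ β s) := by
    rw [eq_div_iff (ne_of_lt hD)]
    linear_combination heq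
  constructor
  · rw [hy'] at hyval ⊢
    rw [hyval]
    exact div_pos_of_neg_of_neg (by linarith) hD
  · rw [hA, hB]
    exact hyval
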